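/- arXiv:2108.03211 — 4 statements merged into one kernel-verified Lean document; each statement's English description precedes it below -/
import Mathlib

section
/- (Proposition 2.9) Let G be a countable group. For ≺ ∈ Õ and g ∈ G let succ_≺(g) be the immediate successor of g in the order ≺ (which exists since ≺ is of type ℤ) and let incr_≺(g) = succ_≺(g)·g⁻¹. Then the map π : Õ → G^G, π(≺) = incr_≺, is injective and Borel measurable (with respect to the Borel σ-algebras of Õ ⊆ {0,1}^{G×G} and of G^G with the product topology, G discrete), and it intertwines the action of G on Õ with the shift action of G on G^G defined by (g·x)(h) = x(hg): that is, incr_{g(≺)}(a) = incr_≺(ag) for all a, g ∈ G and ≺ ∈ Õ. -/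
open scoped Classical

/-- An *order of type ℤ* on `G`. -/
def IsZOrder {G : Type*} (r : G → G → Prop) : Prop :=
  IsStrictTotalOrder G r ∧ (∀ a b : G, {g : G | r a g ∧ r g b}.Finite) ∧
    (∀ a : G, ∃ b, r b a) ∧ (∀ a : G, ∃ b, r a b)

/-- The relation on `G` encoded by an element of `{0,1}^{G×G}`. -/
def relOf {G : Type*} (x : G × G → Bool) : G → G → Prop := fun a b => x (a, b) = true

/-- The set `Õ` of orders of type ℤ on `G`, as a subset of `{0,1}^{G×G}`. -/
def ZOrders (G : Type*) : Set (G × G → Bool) := {x | IsZOrder (relOf x)}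

/-- The action of `g ∈ G` on orders: `a ≺' b ⟺ ag ≺ bg`. -/
def orderAct {G : Type*} [Group G] (g : G) (r : G → G → Prop) : G → G → Prop :=
  fun a b => r (a * g) (b * g)

/-- `b` is the immediate successor of `a` with respect to `r`. -/
def IsSucc {G : Type*} (r : G → G → Prop) (a b : G) : Prop :=
  r a b ∧ ∀ c, ¬(r a c ∧ r c b)

/-- The immediate successor of `a` with respect to `r` (junk value `a` if it does not exist). -/
noncomputable def succOf {G : Type*} (r : G → G → Prop) (a : G) : G :=
  if h : ∃ b, IsSucc r a b then h.choose else a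

/-- The (left) increment of `r` at `a`: `incr_r(a) = succ_r(a)·a⁻¹`. -/
noncomputable def incrOf {G : Type*} [Group G] (r : G → G → Prop) (a : G) : G :=
  succOf r a * a⁻¹

section Aux

variable {G : Type*} {r : G → G → Prop}

/-- A finite nonempty set has a minimal element with respect to a strict total order. -/
lemma ZO.exists_min (hto : IsStrictTotalOrder G r) {s : Set G} (hf : s.Finite)
    (hne : s.Nonempty) : ∃ m ∈ s, ∀ c ∈ s, c ≠ m → r m c := by
  haveI := hto
  classical
  obtain ⟨t, rfl⟩ : ∃ t : Finset G, s = ↑t := ⟨hf.toFinset, by simp⟩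
  induction t using Finset.induction_on with
  | empty => simp at hne
  | @insert a t ha ih =>
    by_cases ht : t.Nonempty
    · obtain ⟨m, hm, hmin⟩ := ih (t.finite_toSet) (by simpa using ht)
      rcases trichotomous_of r a m with hma | heq | ham
      · refine ⟨a, by simp, ?_⟩
        intro c hc hca
        simp only [Finset.coe_insert, Set.mem_insert_iff] at hc
        rcases hc with rfl | hc
        · exact absurd rfl hca
        · rcases eq_or_ne c m with rfl | hcm
          · exact hma
          · exact trans_of r hma (hmin c hc hcm)
      · subst heq
        exact ⟨a, by simp, fun c hc hca => by
          simp only [Finset.coe_insert, Set.mem_insert_iff] at hc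
          rcases hc with rfl | hc
          · exact absurd rfl hca
          · exact hmin c hc hca⟩
      · refine ⟨m, by simp [hm], ?_⟩
        intro c hc hcm
        simp only [Finset.coe_insert, Set.mem_insert_iff] at hc
        rcases hc with rfl | hc
        · exact ham
        · exact hmin c hc hcm
    · rw [Finset.not_nonempty_iff_eq_empty] at ht
      subst ht
      exact ⟨a, by simp, fun c hc hca => by simp at hc; exact absurd hc hca⟩

lemma ZO.exists_isSucc (h : IsZOrder r) (a : G) : ∃ b, IsSucc r a b := by
  haveI := h.1
  obtain ⟨b, hab⟩ := h.2.2.2 a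
  by_cases hS : {g : G | r a g ∧ r g b}.Nonempty
  · obtain ⟨m, hm, hmin⟩ := ZO.exists_min h.1 (h.2.1 a b) hS
    refine ⟨m, hm.1, fun c ⟨hac, hcm⟩ => ?_⟩
    have hc : c ∈ {g : G | r a g ∧ r g b} := ⟨hac, trans_of r hcm hm.2⟩
    have hne : c ≠ m := fun e => irrefl_of r c (e ▸ hcm)
    exact asymm_of r hcm (hmin c hc hne)
  · exact ⟨b, hab, fun c hc => hS ⟨c, hc⟩⟩

lemma ZO.isSucc_unique (hto : IsStrictTotalOrder G r) {a b c : G}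
    (hb : IsSucc r a b) (hc : IsSucc r a c) : b = c := by
  haveI := hto
  rcases trichotomous_of r b c with h1 | h2 | h3
  · exact absurd ⟨hb.1, h1⟩ (hc.2 b)
  · exact h2
  · exact absurd ⟨hc.1, h3⟩ (hb.2 c)

lemma ZO.succOf_eq (hto : IsStrictTotalOrder G r) {a b : G} (hb : IsSucc r a b) :
    succOf r a = b := by
  have hex : ∃ c, IsSucc r a c := ⟨b, hb⟩
  rw [succOf, dif_pos hex]
  exact ZO.isSucc_unique hto hex.choose_spec hb

lemma ZO.isSucc_succOf (h : IsZOrder r) (a : G) : IsSucc r a (succOf r a) := by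
  obtain ⟨b, hb⟩ := ZO.exists_isSucc h a
  rwa [ZO.succOf_eq h.1 hb]

/-- Everything reached by iterating the successor is above. -/
lemma ZO.rel_iterate (h : IsZOrder r) (a : G) (n : ℕ) : r a ((succOf r)^[n + 1] a) := by
  haveI := h.1
  induction n with
  | zero => simpa using (ZO.isSucc_succOf h a).1
  | succ n ih =>
    rw [Function.iterate_succ_apply']
    exact trans_of r ih (ZO.isSucc_succOf h _).1

/-- Everything above is reached by iterating the successor. -/
lemma ZO.reach (h : IsZOrder r) {a b : G} (hab : r a b) :
    ∃ k, (succOf r)^[k + 1] a = b := by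
  haveI := h.1
  classical
  suffices H : ∀ n : ℕ, ∀ a : G, r a b → (h.2.1 a b).toFinset.card ≤ n →
      ∃ k, (succOf r)^[k + 1] a = b from H _ a hab le_rfl
  intro n
  induction n with
  | zero =>
    intro a hab hn
    refine ⟨0, ZO.succOf_eq h.1 ⟨hab, fun c hc => ?_⟩⟩
    have : c ∈ (h.2.1 a b).toFinset := by simpa using hc
    simp [Finset.card_eq_zero.mp (Nat.le_zero.mp hn)] at this
  | succ n ih =>
    intro a hab hn
    by_cases hsb : IsSucc r a b
    · exact ⟨0, ZO.succOf_eq h.1 hsb⟩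
    set s := succOf r a with hs
    have hss : IsSucc r a s := ZO.isSucc_succOf h a
    have hrs : r s b := by
      rcases trichotomous_of r s b with h1 | h2 | h3
      · exact h1
      · exact absurd (h2 ▸ hss) hsb
      · exact absurd ⟨hab, h3⟩ (hss.2 b)
    have hmem : s ∈ (h.2.1 a b).toFinset := by simp [hss.1, hrs]
    have hsub : (h.2.1 s b).toFinset ⊆ (h.2.1 a b).toFinset.erase s := by
      intro c hc
      simp only [Set.Finite.mem_toFinset, Set.mem_setOf_eq] at hc
      refine Finset.mem_erase.mpr ⟨fun e => irrefl_of r s (e ▸ hc.1), ?_⟩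
      simp only [Set.Finite.mem_toFinset, Set.mem_setOf_eq]
      exact ⟨trans_of r hss.1 hc.1, hc.2⟩
    have hcard : (h.2.1 s b).toFinset.card ≤ n := by
      have := Finset.card_le_card hsub
      rw [Finset.card_erase_of_mem hmem] at this
      omega
    obtain ⟨k, hk⟩ := ih s hrs hcard
    exact ⟨k + 1, by rw [Function.iterate_succ_apply]; exact hk⟩

lemma ZO.isSucc_orderAct {H : Type*} [Group H] {r : H → H → Prop} (g a b : H) :
    IsSucc (orderAct g r) a b ↔ IsSucc r (a * g) (b * g) := by
  constructor
  · rintro ⟨h1, h2⟩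
    refine ⟨h1, fun c hc => h2 (c * g⁻¹) ?_⟩
    simpa [orderAct, mul_assoc] using hc
  · rintro ⟨h1, h2⟩
    exact ⟨h1, fun c hc => h2 (c * g) hc⟩

end Aux

/-- Proposition 2.9: the map `π : Õ → G^G`, `π(≺) = incr_≺`, is injective and Borel
measurable (`G` discrete, `G^G` with the product σ-algebra), and it intertwines the
`G`-action on `Õ` with the shift action on `G^G`: `incr_{g(≺)}(a) = incr_≺(ag)`. -/
theorem incr_injective_measurable_equivariant (G : Type*) [Group G] [Countable G]
    [MeasurableSpace G] [DiscreteMeasurableSpace G] :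
    Set.InjOn (fun x : G × G → Bool => fun a : G => incrOf (relOf x) a) (ZOrders G) ∧
    Measurable (fun x : ZOrders G => fun a : G => incrOf (relOf (x : G × G → Bool)) a) ∧
    (∀ x ∈ ZOrders G, ∀ a g : G,
      incrOf (orderAct g (relOf x)) a = incrOf (relOf x) (a * g)) := by
  classical
  refine ⟨?_, ?_, ?_⟩
  · -- injectivity
    intro x hx y hy hxy
    have hsucc : succOf (relOf x) = succOf (relOf y) := by
      funext a
      have := congrFun hxy a
      simp only [incrOf] at this
      exact mul_right_cancel (b := a⁻¹) this
    have key : ∀ a b : G, relOf x a b ↔ relOf y a b := by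
      intro a b
      constructor
      · intro hab
        obtain ⟨k, hk⟩ := ZO.reach hx hab
        have := ZO.rel_iterate hy a k
        rwa [← hsucc, hk] at this
      · intro hab
        obtain ⟨k, hk⟩ := ZO.reach hy hab
        have := ZO.rel_iterate hx a k
        rwa [hsucc, hk] at this
    funext p
    obtain ⟨a, b⟩ := p
    have := key a b
    simp only [relOf] at this
    cases h1 : x (a, b) <;> cases h2 : y (a, b) <;> simp_all
  · -- measurability
    refine measurable_pi_lambda _ fun a => ?_
    refine measurable_to_countable' fun g => ?_
    have hset : (fun x : ZOrders G => incrOf (relOf (x : G × G → Bool)) a) ⁻¹' {g} =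
        Subtype.val ⁻¹' {x : G × G → Bool | IsSucc (relOf x) a (g * a)} := by
      ext ⟨x, hx⟩
      simp only [Set.mem_preimage, Set.mem_singleton_iff, Set.mem_setOf_eq, incrOf]
      constructor
      · intro h
        have hsucc : succOf (relOf x) a = g * a := by
          have := congrArg (· * a) h
          simpa [mul_assoc] using this
        exact hsucc ▸ ZO.isSucc_succOf hx a
      · intro h
        rw [ZO.succOf_eq hx.1 h]
        simp [mul_assoc]
    rw [hset]
    refine measurable_subtype_coe ?_
    have heq : {x : G × G → Bool | IsSucc (relOf x) a (g * a)} =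
        {x : G × G → Bool | x (a, g * a) = true} ∩
          ⋂ c : G, ({x : G × G → Bool | x (a, c) = true} ∩
            {x : G × G → Bool | x (c, g * a) = true})ᶜ := by
      ext x
      simp [IsSucc, relOf, Set.mem_iInter, not_and]
    have hev : ∀ p : G × G, MeasurableSet {x : G × G → Bool | x p = true} := fun p =>
      (measurable_pi_apply (X := fun _ : G × G => Bool) p) (measurableSet_singleton true)
    rw [heq]
    exact (hev _).inter (MeasurableSet.iInter fun c => ((hev _).inter (hev _)).compl)
  · -- equivariance
    intro x hx a g
    have h1 : IsSucc (relOf x) (a * g) (succOf (relOf x) (a * g)) :=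
      ZO.isSucc_succOf hx (a * g)
    have h2 : IsSucc (orderAct g (relOf x)) a (succOf (relOf x) (a * g) * g⁻¹) := by
      rw [ZO.isSucc_orderAct]
      simpa [mul_assoc] using h1
    have hto : IsStrictTotalOrder G (orderAct g (relOf x)) := by
      haveI := hx.1
      haveI : IsTrichotomous G (orderAct g (relOf x)) := ⟨fun a b => by
        intro n1 n2
        rcases trichotomous_of (relOf x) (a * g) (b * g) with h | h | h
        · exact absurd h n1
        · exact mul_right_cancel h
        · exact absurd h n2⟩
      haveI : IsIrrefl G (orderAct g (relOf x)) := ⟨fun a => irrefl_of (relOf x) (a * g)⟩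
      haveI : IsTrans G (orderAct g (relOf x)) := ⟨fun a b c hab hbc => trans_of (relOf x) hab hbc⟩
      haveI : IsStrictOrder G (orderAct g (relOf x)) := ⟨⟩
      exact ⟨⟩
    have := ZO.succOf_eq hto h2
    simp only [incrOf, this]
    group
end

section
/- (Proposition 2.11) Let G be a countable group. For each ≺ ∈ Õ there is a unique anchored bijection bi_≺ : ℤ → G (i.e. bi_≺(0) = e) which is an order isomorphism from (ℤ,<) to (G,≺). The map ρ : Õ → Bi(ℤ,G), ρ(≺) = bi_≺, is a bijection onto the set Bi(ℤ,G) of all anchored bijections ℤ → G; its inverse is continuous (with respect to the topology of Bi(ℤ,G) ⊆ G^ℤ with the product topology, G discrete, and of Õ ⊆ {0,1}^{G×G}); ρ is Borel measurable; and ρ intertwines the G-action on Õ with the G-action on Bi(ℤ,G) defined by (g(bi))(i) = bi(i+k)·g⁻¹ where k is the unique integer with bi(k) = g: that is, for all g ∈ G, i ∈ ℤ and ≺ ∈ Õ, bi_{g(≺)}(i) = bi_≺(i+k)·g⁻¹, where k is the unique integer with bi_≺(k) = g. -/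
open scoped Classical

/-- `f : ℤ → G` is an anchored order isomorphism from `(ℤ,<)` to `(G,r)`. -/
def IsAnchoredIso {G : Type*} [One G] (r : G → G → Prop) (f : ℤ → G) : Prop :=
  Function.Bijective f ∧ f 0 = 1 ∧ ∀ i j : ℤ, i < j ↔ r (f i) (f j)

/-- The anchored bijection `bi_≺ : ℤ → G` associated with an order of type ℤ
(junk value if it does not exist). -/
noncomputable def biOf {G : Type*} [One G] (r : G → G → Prop) : ℤ → G :=
  if h : ∃ f : ℤ → G, IsAnchoredIso r f then h.choose else fun _ => 1

/-- The set `Bi(ℤ,G)` of anchored bijections from `ℤ` to `G`. -/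
def AnchoredBij (G : Type*) [One G] : Set (ℤ → G) :=
  {f | Function.Bijective f ∧ f 0 = 1}

/-- The inverse assignment: the order (as element of `{0,1}^{G×G}`) determined by an
anchored bijection `f : ℤ → G`. -/
noncomputable def ordOfBi {G : Type*} (f : ℤ → G) : G × G → Bool :=
  fun p => decide (∃ i j : ℤ, i < j ∧ f i = p.1 ∧ f j = p.2)

/-! ### Auxiliary lemmas -/

section Aux

variable {G : Type*}

/-- A strictly monotone map `ℤ → ℤ` grows at least linearly. -/
lemma strictMono_int_le {σ : ℤ → ℤ} (hm : StrictMono σ) (a : ℤ) :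
    ∀ n : ℕ, σ a + n ≤ σ (a + n) := by
  intro n
  induction n with
  | zero => simp
  | succ n ih =>
    have h1 : σ (a + n) < σ (a + n + 1) := hm (by omega)
    have h2 : a + ((n : ℤ) + 1) = a + (n : ℤ) + 1 := by ring
    push_cast
    rw [h2]
    omega

lemma strictMono_int_ge_self {σ : ℤ → ℤ} (hm : StrictMono σ) (h0 : σ 0 = 0) {i : ℤ}
    (hi : 0 ≤ i) : i ≤ σ i := by
  have := strictMono_int_le hm 0 i.toNat
  rw [h0, Int.toNat_of_nonneg hi] at this
  simpa using this

lemma strictMono_int_le_self {σ : ℤ → ℤ} (hm : StrictMono σ) (h0 : σ 0 = 0) {i : ℤ}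
    (hi : i ≤ 0) : σ i ≤ i := by
  have := strictMono_int_le hm i (-i).toNat
  rw [Int.toNat_of_nonneg (by omega)] at this
  simp only [add_neg_cancel, h0] at this
  omega

/-- A strictly monotone bijection of `ℤ` fixing `0` is the identity. -/
lemma strictMono_bij_int_eq_id {σ : ℤ → ℤ} (hb : Function.Bijective σ)
    (hm : StrictMono σ) (h0 : σ 0 = 0) : ∀ i, σ i = i := by
  set e := Equiv.ofBijective σ hb with he
  have hτm : StrictMono (⇑e.symm) := by
    intro a b hab
    rw [← hm.lt_iff_lt]
    have ha : σ (e.symm a) = a := e.apply_symm_apply a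
    have hb2 : σ (e.symm b) = b := e.apply_symm_apply b
    rw [ha, hb2]
    exact hab
  have hτ0 : e.symm 0 = 0 := by
    apply e.injective
    rw [e.apply_symm_apply]
    exact h0.symm
  intro i
  rcases le_or_gt 0 i with hi | hi
  · have h1 := strictMono_int_ge_self hm h0 hi
    have h2 := strictMono_int_ge_self hτm hτ0 (le_trans hi h1)
    have h3 : e.symm (σ i) = i := e.symm_apply_apply i
    omega
  · have h1 := strictMono_int_le_self hm h0 hi.le
    have h2 := strictMono_int_le_self hτm hτ0 (le_trans h1 hi.le)
    have h3 : e.symm (σ i) = i := e.symm_apply_apply i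
    omega

/-- Uniqueness of anchored order isomorphisms (for an arbitrary relation). -/
lemma anchored_unique [One G] {r : G → G → Prop} {f f' : ℤ → G}
    (hf : IsAnchoredIso r f) (hf' : IsAnchoredIso r f') : f = f' := by
  obtain ⟨hb, h0, hlt⟩ := hf
  obtain ⟨hb', h0', hlt'⟩ := hf'
  set e' := Equiv.ofBijective f' hb' with he'
  set σ : ℤ → ℤ := fun i => e'.symm (f i) with hσ
  have hfσ : ∀ i, f' (σ i) = f i := fun i => e'.apply_symm_apply (f i)
  have hσb : Function.Bijective σ := e'.symm.bijective.comp hb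
  have hσm : StrictMono σ := by
    intro i j hij
    have h1 : r (f i) (f j) := (hlt i j).mp hij
    have h2 : r (f' (σ i)) (f' (σ j)) := by rw [hfσ, hfσ]; exact h1
    exact (hlt' _ _).mpr h2
  have hσ0 : σ 0 = 0 := by
    have : f' (σ 0) = f' 0 := by rw [hfσ, h0, h0']
    exact hb'.injective this
  funext i
  have := strictMono_bij_int_eq_id hσb hσm hσ0 i
  rw [← hfσ i, this]

lemma biOf_eq_of_iso [One G] {r : G → G → Prop} {f : ℤ → G}
    (hf : IsAnchoredIso r f) : biOf r = f := by
  rw [biOf, dif_pos ⟨f, hf⟩]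
  exact anchored_unique (⟨f, hf⟩ : ∃ f, IsAnchoredIso r f).choose_spec hf

/-- Existence of the anchored isomorphism for an order of type ℤ. -/
lemma exists_anchored_iso [One G] [Countable G] {x : G × G → Bool}
    (hx : x ∈ ZOrders G) : ∃ f : ℤ → G, IsAnchoredIso (relOf x) f := by
  obtain ⟨hSTO, hFin, hMin, hMax⟩ := hx
  haveI := hSTO
  letI : LinearOrder G := linearOrderOfSTO (relOf x)
  have hlt : ∀ a b : G, a < b ↔ relOf x a b := fun a b => Iff.rfl
  letI : LocallyFiniteOrder G := LocallyFiniteOrder.ofFiniteIcc (by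
    intro a b
    apply Set.Finite.subset (((hFin a b).insert a).insert b)
    intro g hg
    obtain ⟨hag, hgb⟩ := hg
    rcases eq_or_lt_of_le hag with h | h
    · exact Set.mem_insert_iff.mpr (Or.inr (Set.mem_insert_iff.mpr (Or.inl h.symm)))
    · rcases eq_or_lt_of_le hgb with h2 | h2
      · exact Set.mem_insert_iff.mpr (Or.inl h2)
      · exact Set.mem_insert_iff.mpr (Or.inr (Set.mem_insert_iff.mpr (Or.inr ⟨h, h2⟩)))
    )
  haveI : NoMinOrder G := ⟨fun a => (hMin a).imp fun _ h => h⟩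
  haveI : NoMaxOrder G := ⟨fun a => (hMax a).imp fun _ h => h⟩
  haveI : Nonempty G := ⟨1⟩
  letI := LinearLocallyFiniteOrder.succOrder G
  letI := LinearLocallyFiniteOrder.predOrder G
  let e : G ≃o ℤ := orderIsoIntOfLinearSuccPredArch
  refine ⟨fun i => e.symm (i + e 1), ⟨?_, ?_, ?_⟩⟩
  · exact e.symm.bijective.comp (Equiv.addRight (e 1)).bijective
  · simp
  · intro i j
    rw [← hlt, e.symm.lt_iff_lt]
    omega

/-- Pullback of the order from an anchored bijection is a ℤ-order for which the
bijection is the anchored isomorphism. -/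
lemma ordOfBi_mem_and_iso [One G] {f : ℤ → G} (hf : f ∈ AnchoredBij G) :
    ordOfBi f ∈ ZOrders G ∧ IsAnchoredIso (relOf (ordOfBi f)) f := by
  obtain ⟨hb, h0⟩ := hf
  set e := Equiv.ofBijective f hb with he
  have hfe : ∀ g : G, f (e.symm g) = g := fun g => e.apply_symm_apply g
  have hse : ∀ i : ℤ, e.symm (f i) = i := fun i => e.symm_apply_apply i
  have hrel : ∀ a b : G, relOf (ordOfBi f) a b ↔ e.symm a < e.symm b := by
    intro a b
    rw [relOf, ordOfBi, decide_eq_true_eq]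
    constructor
    · rintro ⟨i, j, hij, rfl, rfl⟩
      rw [hse, hse]
      exact hij
    · intro h
      exact ⟨e.symm a, e.symm b, h, hfe a, hfe b⟩
  constructor
  · refine ⟨?_, ?_, ?_, ?_⟩
    · exact
        { trichotomous := fun a b hab hba => by
            rcases lt_trichotomy (e.symm a) (e.symm b) with h | h | h
            · exact absurd ((hrel a b).mpr h) hab
            · exact e.symm.injective h
            · exact absurd ((hrel b a).mpr h) hba
          irrefl := fun a h => lt_irrefl _ ((hrel a a).mp h)
          trans := fun a b c hab hbc =>
            (hrel a c).mpr (lt_trans ((hrel a b).mp hab) ((hrel b c).mp hbc)) }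
    · intro a b
      apply Set.Finite.subset ((Set.finite_Ioo (e.symm a) (e.symm b)).image f)
      intro g hg
      exact ⟨e.symm g, ⟨((hrel a g).mp hg.1), ((hrel g b).mp hg.2)⟩, hfe g⟩
    · intro a
      refine ⟨f (e.symm a - 1), (hrel _ _).mpr ?_⟩
      rw [hse]; omega
    · intro a
      refine ⟨f (e.symm a + 1), (hrel _ _).mpr ?_⟩
      rw [hse]; omega
  · refine ⟨hb, h0, fun i j => ?_⟩
    rw [hrel, hse, hse]

lemma biOf_spec [One G] [Countable G] {x : G × G → Bool} (hx : x ∈ ZOrders G) :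
    IsAnchoredIso (relOf x) (biOf (relOf x)) := by
  obtain ⟨f, hf⟩ := exists_anchored_iso hx
  rw [biOf_eq_of_iso hf]
  exact hf

lemma ordOfBi_biOf [One G] [Countable G] {x : G × G → Bool} (hx : x ∈ ZOrders G) :
    ordOfBi (biOf (relOf x)) = x := by
  obtain ⟨hb, h0, hlt⟩ := biOf_spec hx
  set f := biOf (relOf x)
  funext p
  obtain ⟨a, b⟩ := p
  have key : (∃ i j : ℤ, i < j ∧ f i = a ∧ f j = b) ↔ x (a, b) = true := by
    constructor
    · rintro ⟨i, j, hij, rfl, rfl⟩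
      exact (hlt i j).mp hij
    · intro h
      obtain ⟨i, rfl⟩ := hb.surjective a
      obtain ⟨j, rfl⟩ := hb.surjective b
      exact ⟨i, j, (hlt i j).mpr h, rfl, rfl⟩
  show decide (∃ i j : ℤ, i < j ∧ f i = a ∧ f j = b) = x (a, b)
  by_cases h : x (a, b) = true
  · rw [h]
    exact decide_eq_true (key.mpr h)
  · rw [Bool.not_eq_true] at h
    rw [h]
    exact decide_eq_false fun hP => absurd (key.mp hP) (by simp [h])

end Aux

/-! ### The counting characterization of `biOf`, for measurability -/

section Cond

variable {G : Type*} [One G]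

/-- `condAt x i g` says that `g` sits at position `i` (relative to `1`) in the
order encoded by `x`; it is a countable Boolean combination of coordinate events. -/
def condAt (x : G × G → Bool) (i : ℤ) (g : G) : Prop :=
  (i = 0 ∧ g = 1) ∨
  (x (1, g) = true ∧ ∃ T : Finset G, (T.card : ℤ) + 1 = i ∧
    ∀ h : G, (x (1, h) = true ∧ x (h, g) = true) ↔ h ∈ T) ∨
  (x (g, 1) = true ∧ ∃ T : Finset G, (T.card : ℤ) + 1 = -i ∧
    ∀ h : G, (x (g, h) = true ∧ x (h, 1) = true) ↔ h ∈ T)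

lemma condAt_injective {x : G × G → Bool} (hx : x ∈ ZOrders G) {i j : ℤ} {g : G}
    (hi : condAt x i g) (hj : condAt x j g) : i = j := by
  obtain ⟨hSTO, -, -, -⟩ := hx
  haveI := hSTO
  have hirr : ∀ a : G, ¬ relOf x a a := fun a => irrefl_of (relOf x) a
  have hasymm : ∀ a b : G, relOf x a b → relOf x b a → False := fun a b h1 h2 =>
    hirr a (trans_of (relOf x) h1 h2)
  rcases hi with ⟨hi0, hg1⟩ | ⟨h1g, T, hT, hTmem⟩ | ⟨hg1, T, hT, hTmem⟩ <;>
    rcases hj with ⟨hj0, hg1'⟩ | ⟨h1g', T', hT', hTmem'⟩ | ⟨hg1', T', hT', hTmem'⟩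
  · omega
  · rw [hg1] at h1g'; exact absurd h1g' (hirr 1)
  · rw [hg1] at hg1'; exact absurd hg1' (hirr 1)
  · rw [hg1'] at h1g; exact absurd h1g (hirr 1)
  · have hTT : T = T' := Finset.ext fun h => (hTmem h).symm.trans (hTmem' h)
    rw [hTT] at hT; omega
  · exact (hasymm _ _ h1g hg1').elim
  · rw [hg1'] at hg1; exact absurd hg1 (hirr 1)
  · exact (hasymm _ _ h1g' hg1).elim
  · have hTT : T = T' := Finset.ext fun h => (hTmem h).symm.trans (hTmem' h)
    rw [hTT] at hT; omega

lemma condAt_iff {x : G × G → Bool} [Countable G] (hx : x ∈ ZOrders G) (i : ℤ) (g : G) :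
    biOf (relOf x) i = g ↔ condAt x i g := by
  obtain ⟨hb, h0, hlt⟩ := biOf_spec hx
  set f := biOf (relOf x) with hf
  have forward : ∀ k : ℤ, condAt x k (f k) := by
    intro k
    rcases lt_trichotomy k 0 with hk | hk | hk
    · refine Or.inr (Or.inr ⟨?_, (Finset.Ioo k 0).image f, ?_, ?_⟩)
      · rw [← h0]; exact (hlt k 0).mp hk
      · rw [Finset.card_image_of_injective _ hb.injective, Int.card_Ioo,
          Int.toNat_of_nonneg (by omega)]
        ring
      · intro h
        rw [Finset.mem_image]
        constructor
        · rintro ⟨hgh, hh1⟩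
          obtain ⟨j, rfl⟩ := hb.surjective h
          refine ⟨j, Finset.mem_Ioo.mpr ⟨(hlt k j).mpr hgh, (hlt j 0).mpr ?_⟩, rfl⟩
          rwa [h0]
        · rintro ⟨j, hj, rfl⟩
          obtain ⟨hj1, hj2⟩ := Finset.mem_Ioo.mp hj
          exact ⟨(hlt k j).mp hj1, by rw [← h0]; exact (hlt j 0).mp hj2⟩
    · exact Or.inl ⟨hk, by rw [hk]; exact h0⟩
    · refine Or.inr (Or.inl ⟨?_, (Finset.Ioo 0 k).image f, ?_, ?_⟩)
      · rw [← h0]; exact (hlt 0 k).mp hk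
      · rw [Finset.card_image_of_injective _ hb.injective, Int.card_Ioo,
          Int.toNat_of_nonneg (by omega)]
        ring
      · intro h
        rw [Finset.mem_image]
        constructor
        · rintro ⟨h1h, hhk⟩
          obtain ⟨j, rfl⟩ := hb.surjective h
          refine ⟨j, Finset.mem_Ioo.mpr ⟨(hlt 0 j).mpr ?_, (hlt j k).mpr hhk⟩, rfl⟩
          rwa [h0]
        · rintro ⟨j, hj, rfl⟩
          obtain ⟨hj1, hj2⟩ := Finset.mem_Ioo.mp hj
          exact ⟨by rw [← h0]; exact (hlt 0 j).mp hj1, (hlt j k).mp hj2⟩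
  constructor
  · rintro rfl
    exact forward i
  · intro hc
    obtain ⟨j, rfl⟩ := hb.surjective g
    rw [condAt_injective hx hc (forward j)]

lemma measurableSet_condAt [Countable G] (i : ℤ) (g : G) :
    MeasurableSet {x : G × G → Bool | condAt x i g} := by
  have hcoord : ∀ p : G × G, MeasurableSet {x : G × G → Bool | x p = true} := by
    intro p
    have h1 : {x : G × G → Bool | x p = true} =
        (fun x : G × G → Bool => x p) ⁻¹' {true} := rfl
    rw [h1]
    exact measurable_pi_apply p (measurableSet_singleton true)
  have hpair : ∀ p q : G × G,
      MeasurableSet {x : G × G → Bool | x p = true ∧ x q = true} :=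
    fun p q => (hcoord p).inter (hcoord q)
  have hiff : ∀ (p q : G × G) (Q : Prop),
      MeasurableSet {x : G × G → Bool | (x p = true ∧ x q = true) ↔ Q} := by
    intro p q Q
    by_cases hq : Q
    · simp only [hq, iff_true]
      exact hpair p q
    · simp only [hq, iff_false]
      have : {x : G × G → Bool | ¬(x p = true ∧ x q = true)} =
          ({x : G × G → Bool | x p = true ∧ x q = true})ᶜ := rfl
      rw [this]
      exact (hpair p q).compl
  simp only [condAt, Set.setOf_or]
  refine MeasurableSet.union (MeasurableSet.const _) (MeasurableSet.union ?_ ?_)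
  · have : {x : G × G → Bool | x (1, g) = true ∧ ∃ T : Finset G, (T.card : ℤ) + 1 = i ∧
        ∀ h : G, (x (1, h) = true ∧ x (h, g) = true) ↔ h ∈ T} =
        {x : G × G → Bool | x (1, g) = true} ∩
        ⋃ (T : Finset G) (_ : (T.card : ℤ) + 1 = i),
          ⋂ h : G, {x : G × G → Bool | (x (1, h) = true ∧ x (h, g) = true) ↔ h ∈ T} := by
      ext x
      simp only [Set.mem_setOf_eq, Set.mem_inter_iff, Set.mem_iUnion, Set.mem_iInter, exists_prop]
    rw [this]
    exact (hcoord _).inter (MeasurableSet.iUnion fun T => MeasurableSet.iUnion fun _ =>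
      MeasurableSet.iInter fun h => hiff _ _ _)
  · have : {x : G × G → Bool | x (g, 1) = true ∧ ∃ T : Finset G, (T.card : ℤ) + 1 = -i ∧
        ∀ h : G, (x (g, h) = true ∧ x (h, 1) = true) ↔ h ∈ T} =
        {x : G × G → Bool | x (g, 1) = true} ∩
        ⋃ (T : Finset G) (_ : (T.card : ℤ) + 1 = -i),
          ⋂ h : G, {x : G × G → Bool | (x (g, h) = true ∧ x (h, 1) = true) ↔ h ∈ T} := by
      ext x
      simp only [Set.mem_setOf_eq, Set.mem_inter_iff, Set.mem_iUnion, Set.mem_iInter, exists_prop]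
    rw [this]
    exact (hcoord _).inter (MeasurableSet.iUnion fun T => MeasurableSet.iUnion fun _ =>
      MeasurableSet.iInter fun h => hiff _ _ _)

end Cond

/-! ### Main theorem -/

/-- Proposition 2.11: every order `≺` of type ℤ on `G` admits a unique anchored order
isomorphism `bi_≺ : (ℤ,<) → (G,≺)`; the map `ρ : ≺ ↦ bi_≺` is a bijection from `Õ` onto
`Bi(ℤ,G)`, its inverse is continuous, `ρ` is Borel measurable, and `ρ` intertwines the
`G`-actions: `bi_{g(≺)}(i) = bi_≺(i+k)·g⁻¹` where `k` is the unique integer with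
`bi_≺(k) = g`. -/
theorem biOf_bijective_measurable_equivariant (G : Type*) [Group G] [Countable G]
    [Infinite G] [TopologicalSpace G] [DiscreteTopology G]
    [MeasurableSpace G] [DiscreteMeasurableSpace G] :
    (∀ x ∈ ZOrders G, ∃! f : ℤ → G, IsAnchoredIso (relOf x) f) ∧
    Set.BijOn (fun x : G × G → Bool => biOf (relOf x)) (ZOrders G) (AnchoredBij G) ∧
    ContinuousOn (ordOfBi : (ℤ → G) → (G × G → Bool)) (AnchoredBij G) ∧
    (∀ x ∈ ZOrders G, ordOfBi (biOf (relOf x)) = x) ∧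
    Measurable (fun x : ZOrders G => biOf (relOf (x : G × G → Bool))) ∧
    (∀ x ∈ ZOrders G, ∀ (g : G) (i k : ℤ), biOf (relOf x) k = g →
      biOf (orderAct g (relOf x)) i = biOf (relOf x) (i + k) * g⁻¹) := by
  refine ⟨?_, ⟨?_, ?_, ?_⟩, ?_, ?_, ?_, ?_⟩
  · -- existence and uniqueness
    intro x hx
    exact ⟨biOf (relOf x), biOf_spec hx, fun f hf => anchored_unique hf (biOf_spec hx)⟩
  · -- MapsTo
    intro x hx
    obtain ⟨hb, h0, -⟩ := biOf_spec hx
    exact ⟨hb, h0⟩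
  · -- InjOn
    intro x hx y hy hxy
    have h1 := ordOfBi_biOf hx
    have h2 := ordOfBi_biOf hy
    simp only at hxy
    rw [← h1, ← h2, hxy]
  · -- SurjOn
    intro f hf
    obtain ⟨hmem, hiso⟩ := ordOfBi_mem_and_iso hf
    exact ⟨ordOfBi f, hmem, biOf_eq_of_iso hiso⟩
  · -- continuity of ordOfBi on AnchoredBij
    intro f hf
    rw [continuousWithinAt_pi]
    intro p
    obtain ⟨a, b⟩ := p
    obtain ⟨hb, h0⟩ := hf
    set e := Equiv.ofBijective f hb with he
    set U : Set (ℤ → G) := {g | g (e.symm a) = a ∧ g (e.symm b) = b} with hU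
    have hUopen : IsOpen U := by
      have hc1 : Continuous fun g : ℤ → G => g (e.symm a) := continuous_apply _
      have hc2 : Continuous fun g : ℤ → G => g (e.symm b) := continuous_apply _
      exact ((isOpen_discrete ({a} : Set G)).preimage hc1).inter
        ((isOpen_discrete ({b} : Set G)).preimage hc2)
    have hfU : f ∈ U := ⟨e.apply_symm_apply a, e.apply_symm_apply b⟩
    have hconst : ∀ g ∈ U ∩ AnchoredBij G,
        ordOfBi g (a, b) = decide (e.symm a < e.symm b) := by
      rintro g ⟨⟨hga, hgb⟩, hgbij, -⟩
      show decide (∃ i j : ℤ, i < j ∧ g i = a ∧ g j = b) = _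
      congr 1
      simp only [eq_iff_iff]
      constructor
      · rintro ⟨i, j, hij, hgi, hgj⟩
        have hi : i = e.symm a := hgbij.injective (hgi.trans hga.symm)
        have hj : j = e.symm b := hgbij.injective (hgj.trans hgb.symm)
        rw [← hi, ← hj]
        exact hij
      · intro h
        exact ⟨e.symm a, e.symm b, h, hga, hgb⟩
    refine ContinuousWithinAt.congr_of_eventuallyEq (continuousWithinAt_const (b := decide (e.symm a < e.symm b))) ?_ ?_
    · filter_upwards [Filter.inter_mem (mem_nhdsWithin_of_mem_nhds (hUopen.mem_nhds hfU))
        self_mem_nhdsWithin] with g hg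
      exact hconst g hg
    · exact hconst f ⟨hfU, hb, h0⟩
  · -- ordOfBi ∘ biOf = id on ZOrders
    intro x hx
    exact ordOfBi_biOf hx
  · -- measurability
    rw [measurable_pi_iff]
    intro i
    apply measurable_to_countable'
    intro g
    have hset : (fun x : ZOrders G => biOf (relOf (x : G × G → Bool)) i) ⁻¹' {g} =
        Subtype.val ⁻¹' {x : G × G → Bool | condAt x i g} := by
      ext x
      simp only [Set.mem_preimage, Set.mem_singleton_iff, Set.mem_setOf_eq]
      exact condAt_iff x.2 i g
    rw [hset]
    exact measurable_subtype_coe (measurableSet_condAt i g)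
  · -- equivariance
    intro x hx g i k hk
    obtain ⟨hb, h0, hlt⟩ := biOf_spec hx
    set f := biOf (relOf x) with hf
    have hiso : IsAnchoredIso (orderAct g (relOf x)) (fun i => f (i + k) * g⁻¹) := by
      refine ⟨?_, ?_, ?_⟩
      · exact (Equiv.mulRight g⁻¹).bijective.comp (hb.comp (Equiv.addRight k).bijective)
      · show f (0 + k) * g⁻¹ = 1
        rw [zero_add, hk]
        simp
      · intro a b
        show a < b ↔ relOf x (f (a + k) * g⁻¹ * g) (f (b + k) * g⁻¹ * g)
        rw [inv_mul_cancel_right, inv_mul_cancel_right, ← hlt]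
        omega
    rw [biOf_eq_of_iso hiso]
end

section
/- (Corollary 2.8) Let G be a countably infinite group admitting a Følner sequence. Then there exists a Følner sequence (F_n)_{n∈ℕ} in G which is nested (F_n ⊆ F_{n+1} for all n), centered (F_1 = {e}), and progresses by one element (|F_n| = n for all n ∈ ℕ). -/
open Filter Finset
open scoped Classical symmDiff
set_option linter.unusedSectionVars false
set_option maxHeartbeats 1000000

/-- A Følner sequence in `G`: a sequence of nonempty finite sets `F n` with
`|F n △ g·F n| / |F n| → 0` for every `g ∈ G`. -/
def IsFolnerSeq {G : Type*} [Group G] (F : ℕ → Finset G) : Prop :=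
  (∀ n, (F n).Nonempty) ∧ ∀ g : G,
    Tendsto (fun n => ((F n ∆ (F n).image (fun h => g * h)).card : ℝ) / (F n).card)
      atTop (nhds 0)

noncomputable section FolnerAux

variable {G : Type*} [Group G] [Infinite G]

/-- choose a right-translator making `F * t` disjoint from `C`. -/
def pickT (F C : Finset G) : G :=
  Classical.choose (Infinite.exists_notMem_finset (F.biUnion fun x => C.image (fun c => x⁻¹ * c)))

lemma pickT_spec (F C : Finset G) {x : G} (hx : x ∈ F) : x * pickT F C ∉ C := by
  intro hc
  apply Classical.choose_spec
    (Infinite.exists_notMem_finset (F.biUnion fun x => C.image (fun c => x⁻¹ * c)))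
  exact Finset.mem_biUnion.2 ⟨x, hx, Finset.mem_image.2 ⟨x * pickT F C, hc, by
    rw [inv_mul_cancel_left]; rfl⟩⟩

variable (FF : ℕ → Finset G)

def fsz (j : ℕ) : ℕ := (FF j).card

def aSeq : ℕ → ℕ
  | 0 => 1
  | j+1 => aSeq j + (max (2*(j+1)*(aSeq j)) (8*(j+2)*(fsz FF (j+1)))) * fsz FF j

def Nblk (j : ℕ) : ℕ := max (2*(j+1)*(aSeq FF j)) (8*(j+2)*(fsz FF (j+1)))

lemma aSeq_succ (j : ℕ) : aSeq FF (j+1) = aSeq FF j + Nblk FF j * fsz FF j := rfl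

def stageU (j : ℕ) (A : Finset G) : ℕ → Finset G
  | 0 => A
  | i+1 => stageU j A i ∪ (FF j).image (fun x => x * pickT (FF j) (stageU j A i))

def Aset : ℕ → Finset G
  | 0 => {1}
  | j+1 => stageU FF j (Aset j) (Nblk FF j)

def sTr (j i : ℕ) : G := pickT (FF j) (stageU FF j (Aset FF j) i)

def blk (j i : ℕ) : Finset G := (FF j).image (fun x => x * sTr FF j i)

lemma stageU_succ (j i : ℕ) :
    stageU FF j (Aset FF j) (i+1) = stageU FF j (Aset FF j) i ∪ blk FF j i := rfl

lemma stageU_eq (j i : ℕ) :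
    stageU FF j (Aset FF j) i = Aset FF j ∪ (range i).biUnion (blk FF j) := by
  induction i with
  | zero => simp [stageU]
  | succ i ih =>
      rw [stageU_succ, ih, Finset.range_add_one, Finset.biUnion_insert, Finset.union_assoc,
        Finset.union_comm (blk FF j i)]

def wSeq (j m : ℕ) : G := ((FF j).toList.getD (m % fsz FF j) 1) * sTr FF j (m / fsz FF j)

def Dset (j m : ℕ) : Finset G := Aset FF j ∪ (range m).image (wSeq FF j)

def Pfx (j r : ℕ) : Finset G := ((FF j).toList.take r).toFinset

def dcard (j : ℕ) (g : G) : ℕ := ((FF j) ∆ (FF j).image (fun h => g * h)).card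

section SymmDiff

variable {H : Type*} [DecidableEq H]

lemma card_symmDiff_le (s t : Finset H) : (s ∆ t).card ≤ s.card + t.card := by
  refine le_trans (Finset.card_le_card ?_) (Finset.card_union_le s t)
  intro x hx
  rw [Finset.mem_symmDiff] at hx
  rw [Finset.mem_union]
  tauto

lemma symmDiff_union_subset (s₁ s₂ t₁ t₂ : Finset H) :
    (s₁ ∪ s₂) ∆ (t₁ ∪ t₂) ⊆ (s₁ ∆ t₁) ∪ (s₂ ∆ t₂) := by
  intro x hx
  simp only [Finset.mem_symmDiff, Finset.mem_union] at hx
  simp only [Finset.mem_union, Finset.mem_symmDiff]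
  tauto

lemma card_symmDiff_union_le (s₁ s₂ t₁ t₂ : Finset H) :
    ((s₁ ∪ s₂) ∆ (t₁ ∪ t₂)).card ≤ (s₁ ∆ t₁).card + (s₂ ∆ t₂).card :=
  le_trans (Finset.card_le_card (symmDiff_union_subset s₁ s₂ t₁ t₂)) (Finset.card_union_le _ _)

lemma card_symmDiff_biUnion_le (k : ℕ) (X Y : ℕ → Finset H) :
    (((range k).biUnion X) ∆ ((range k).biUnion Y)).card ≤
      ∑ i ∈ range k, (X i ∆ Y i).card := by
  induction k with
  | zero => simp
  | succ k ih =>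
    rw [Finset.range_add_one, Finset.biUnion_insert, Finset.biUnion_insert, Finset.sum_insert
      (by simp)]
    exact le_trans (card_symmDiff_union_le _ _ _ _) (by omega)

end SymmDiff

lemma translate_symmDiff_card (X Y : Finset G) (s : G) :
    ((X.image (fun x => x * s)) ∆ (Y.image (fun x => x * s))).card = (X ∆ Y).card := by
  have hinj : Function.Injective (fun x : G => x * s) := fun a b hab => by
    simpa using mul_right_cancel hab
  rw [← Finset.image_symmDiff _ _ hinj, Finset.card_image_of_injective _ hinj]

lemma g_image_translate (g s : G) (X : Finset G) :
    (X.image (fun x => x * s)).image (fun h => g * h) =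
      (X.image (fun h => g * h)).image (fun x => x * s) := by
  rw [Finset.image_image, Finset.image_image]
  exact Finset.image_congr (fun x _ => by simp [Function.comp, mul_assoc])

lemma card_symmDiff_gimage_le (g : G) (X : Finset G) :
    ((X ∆ X.image (fun h => g * h)).card) ≤ 2 * X.card := by
  have : (X.image (fun h => g * h)).card = X.card :=
    Finset.card_image_of_injective _ (fun a b hab => by simpa using mul_left_cancel hab)
  have h2 := card_symmDiff_le X (X.image (fun h => g * h))
  omega

lemma blk_symmDiff_card (j i : ℕ) (g : G) :
    ((blk FF j i) ∆ (blk FF j i).image (fun h => g * h)).card = dcard FF j g := by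
  rw [blk, g_image_translate, translate_symmDiff_card, dcard]


section Struct

variable (hne : ∀ j, (FF j).Nonempty)
include hne

lemma fsz_pos (j : ℕ) : 0 < fsz FF j := Finset.card_pos.2 (hne j)

lemma Pfx_succ (j r : ℕ) (hr : r < fsz FF j) :
    Pfx FF j (r+1) = insert ((FF j).toList.getD r 1) (Pfx FF j r) := by
  have hlen : r < (FF j).toList.length := by
    rwa [Finset.length_toList]
  rw [Pfx, List.take_succ, List.getElem?_eq_getElem hlen, List.toFinset_append]
  rw [List.getD_eq_getElem _ _ hlen]
  ext x; simp only [Pfx, Finset.mem_union, Finset.mem_insert, List.mem_toFinset, Option.toList_some, List.mem_singleton]; tauto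

lemma Pfx_full (j : ℕ) : Pfx FF j (fsz FF j) = FF j := by
  have : fsz FF j = (FF j).toList.length := (Finset.length_toList _).symm
  rw [Pfx, this, List.take_length, Finset.toList_toFinset]

lemma Pfx_subset (j r : ℕ) : Pfx FF j r ⊆ FF j := by
  intro x hx
  rw [Pfx, List.mem_toFinset] at hx
  have := List.take_subset r (FF j).toList hx
  rwa [Finset.mem_toList] at this

lemma Dset_zero (j : ℕ) : Dset FF j 0 = Aset FF j := by
  simp [Dset]

lemma Dset_decomp (j m : ℕ) :
    Dset FF j m = stageU FF j (Aset FF j) (m / fsz FF j) ∪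
      (Pfx FF j (m % fsz FF j)).image (fun x => x * sTr FF j (m / fsz FF j)) := by
  induction m with
  | zero => simp [Dset, Pfx, stageU]
  | succ m ih =>
    have hf : 0 < fsz FF j := fsz_pos FF hne j
    have hr : m % fsz FF j < fsz FF j := Nat.mod_lt _ hf
    have hm : m = m % fsz FF j + fsz FF j * (m / fsz FF j) := by
      rw [add_comm]; exact (Nat.div_add_mod m (fsz FF j)).symm
    have hDins : Dset FF j (m+1) = insert (wSeq FF j m) (Dset FF j m) := by
      rw [Dset, Dset, Finset.range_add_one, Finset.image_insert, Finset.union_insert]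
    rcases lt_or_eq_of_le (Nat.succ_le_of_lt hr) with h | h
    · -- partial block grows
      have hmod : (m+1) % fsz FF j = m % fsz FF j + 1 := by
        conv_lhs => rw [hm, add_right_comm, Nat.add_mul_mod_self_left]
        exact Nat.mod_eq_of_lt h
      have hdiv : (m+1) / fsz FF j = m / fsz FF j := by
        conv_lhs => rw [hm, add_right_comm, Nat.add_mul_div_left _ _ hf]
        rw [Nat.div_eq_of_lt h, zero_add]
      rw [hDins, ih, hmod, hdiv, Pfx_succ FF hne _ _ hr, Finset.image_insert,
        Finset.union_insert, wSeq]
    · -- a block gets completed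
      have hmeq : m + 1 = fsz FF j * (m / fsz FF j + 1) := by
        rw [Nat.mul_succ]; omega
      have hmod : (m+1) % fsz FF j = 0 := by rw [hmeq]; exact Nat.mul_mod_right _ _
      have hdiv : (m+1) / fsz FF j = m / fsz FF j + 1 := by
        rw [hmeq]; exact Nat.mul_div_cancel_left _ hf
      have hPf : FF j = insert ((FF j).toList.getD (m % fsz FF j) 1) (Pfx FF j (m % fsz FF j)) := by
        rw [← Pfx_succ FF hne _ _ hr, show m % fsz FF j + 1 = fsz FF j from h, Pfx_full FF hne]
      have hblk : blk FF j (m / fsz FF j) =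
          ((insert ((FF j).toList.getD (m % fsz FF j) 1) (Pfx FF j (m % fsz FF j))).image
            (fun x => x * sTr FF j (m / fsz FF j))) := by
        conv_lhs => rw [blk, hPf]
      rw [hDins, ih, hmod, hdiv, stageU_succ, hblk, Finset.image_insert, Finset.union_insert,
        wSeq]
      simp [Pfx]

lemma wSeq_not_mem (j m : ℕ) : wSeq FF j m ∉ Dset FF j m := by
  have hf := fsz_pos FF hne j
  have hr : m % fsz FF j < fsz FF j := Nat.mod_lt _ hf
  have hlen : m % fsz FF j < (FF j).toList.length := by rwa [Finset.length_toList]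
  rw [Dset_decomp FF hne, Finset.mem_union]
  rintro (h | h)
  · have hx : (FF j).toList.getD (m % fsz FF j) 1 ∈ FF j := by
      rw [List.getD_eq_getElem _ _ hlen]
      exact Finset.mem_toList.1 (List.getElem_mem hlen)
    exact pickT_spec _ _ hx h
  · rcases Finset.mem_image.1 h with ⟨y, hy, hxy⟩
    have hy' : y = (FF j).toList.getD (m % fsz FF j) 1 := mul_right_cancel hxy
    rw [Pfx, List.mem_toFinset] at hy
    obtain ⟨k, hk, hkeq⟩ := List.getElem_of_mem hy
    have hk' : k < m % fsz FF j := by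
      have := hk
      rw [List.length_take] at this
      omega
    have hkl : k < (FF j).toList.length := by omega
    have : (FF j).toList[k] = (FF j).toList[m % fsz FF j] := by
      rw [← List.getElem_take (h := hk), hkeq, hy',
        List.getD_eq_getElem _ _ hlen]
    rw [((FF j).nodup_toList).getElem_inj_iff] at this
    omega

lemma Dset_card (j m : ℕ) : (Dset FF j m).card = (Aset FF j).card + m := by
  induction m with
  | zero => simp [Dset]
  | succ m ih =>
    have : Dset FF j (m+1) = insert (wSeq FF j m) (Dset FF j m) := by
      rw [Dset, Dset, Finset.range_add_one, Finset.image_insert, Finset.union_insert]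
    rw [this, Finset.card_insert_of_notMem (wSeq_not_mem FF hne j m), ih]
    omega

lemma Dset_full (j : ℕ) : Dset FF j (Nblk FF j * fsz FF j) = Aset FF (j+1) := by
  have hf := fsz_pos FF hne j
  rw [Dset_decomp FF hne, Nat.mul_mod_left, Nat.mul_div_cancel _ hf]
  simp [Pfx, Aset]

lemma Aset_card (j : ℕ) : (Aset FF j).card = aSeq FF j := by
  induction j with
  | zero => simp [Aset, aSeq]
  | succ j ih =>
    rw [← Dset_full FF hne j, Dset_card FF hne, ih, aSeq_succ]

lemma Aset_invariance (j : ℕ) (g : G) :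
    ((Aset FF (j+1)) ∆ (Aset FF (j+1)).image (fun h => g * h)).card ≤
      2 * aSeq FF j + Nblk FF j * dcard FF j g := by
  rw [show Aset FF (j+1) = stageU FF j (Aset FF j) (Nblk FF j) from rfl, stageU_eq,
    Finset.image_union, Finset.biUnion_image]
  refine le_trans (card_symmDiff_union_le _ _ _ _) ?_
  have h1 : ((Aset FF j) ∆ (Aset FF j).image (fun h => g * h)).card ≤ 2 * aSeq FF j := by
    rw [← Aset_card FF hne j]
    exact card_symmDiff_gimage_le g _
  have h2 : (((range (Nblk FF j)).biUnion (blk FF j)) ∆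
      ((range (Nblk FF j)).biUnion (fun i => (blk FF j i).image (fun h => g * h)))).card ≤
      Nblk FF j * dcard FF j g := by
    refine le_trans (card_symmDiff_biUnion_le _ _ _) ?_
    rw [Finset.sum_congr rfl (fun i _ => blk_symmDiff_card FF j i g), Finset.sum_const,
      Finset.card_range, smul_eq_mul]
  omega

lemma Dset_invariance (j m : ℕ) (g : G) :
    ((Dset FF j m) ∆ (Dset FF j m).image (fun h => g * h)).card ≤
      ((Aset FF j) ∆ (Aset FF j).image (fun h => g * h)).card +
        (m / fsz FF j) * dcard FF j g + 2 * fsz FF j := by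
  rw [Dset_decomp FF hne, stageU_eq, Finset.union_assoc, Finset.image_union,
    Finset.image_union, Finset.biUnion_image]
  set A := Aset FF j with hA
  set B := (range (m / fsz FF j)).biUnion (blk FF j) with hB
  set P := (Pfx FF j (m % fsz FF j)).image (fun x => x * sTr FF j (m / fsz FF j)) with hP
  set A' := A.image (fun h => g * h) with hA'
  set B' := (range (m / fsz FF j)).biUnion (fun i => (blk FF j i).image (fun h => g * h))
    with hB'
  set P' := P.image (fun h => g * h) with hP'
  have e1 : ((A ∪ (B ∪ P)) ∆ (A' ∪ (B' ∪ P'))).card ≤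
      (A ∆ A').card + ((B ∪ P) ∆ (B' ∪ P')).card := card_symmDiff_union_le A (B ∪ P) A' (B' ∪ P')
  have e2 : ((B ∪ P) ∆ (B' ∪ P')).card ≤ (B ∆ B').card + (P ∆ P').card :=
    card_symmDiff_union_le B P B' P'
  have h2 : (B ∆ B').card ≤ (m / fsz FF j) * dcard FF j g := by
    rw [hB, hB']
    refine le_trans (card_symmDiff_biUnion_le _ _ _) ?_
    rw [Finset.sum_congr rfl (fun i _ => blk_symmDiff_card FF j i g), Finset.sum_const,
      Finset.card_range, smul_eq_mul]
  have h3 : (P ∆ P').card ≤ 2 * fsz FF j := by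
    refine le_trans (card_symmDiff_gimage_le g P) ?_
    have : P.card ≤ fsz FF j := by
      rw [hP]
      exact le_trans (Finset.card_image_le) (Finset.card_le_card (Pfx_subset FF hne j _))
    omega
  omega

lemma Nblk_pos (j : ℕ) : 0 < Nblk FF j := by
  have h2 := fsz_pos FF hne (j+1)
  exact lt_of_lt_of_le (Nat.mul_pos (Nat.mul_pos (by omega) (by omega)) h2)
    (le_max_right (2*(j+1)*(aSeq FF j)) _)

lemma aSeq_lt_succ (j : ℕ) : aSeq FF j < aSeq FF (j+1) := by
  have h1 := fsz_pos FF hne j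
  have hN := Nblk_pos FF hne j
  have hNf : 0 < Nblk FF j * fsz FF j := Nat.mul_pos hN h1
  rw [aSeq_succ]
  omega

lemma aSeq_mono : Monotone (aSeq FF) :=
  monotone_nat_of_le_succ fun j => le_of_lt (aSeq_lt_succ FF hne j)

lemma lt_aSeq (j : ℕ) : j + 1 ≤ aSeq FF j := by
  induction j with
  | zero => simp [aSeq]
  | succ j ih => have := aSeq_lt_succ FF hne j; omega

def stIdx (n : ℕ) : ℕ := Nat.findGreatest (fun j => aSeq FF j ≤ n+1) (n+1)

lemma stIdx_le (n : ℕ) : aSeq FF (stIdx FF n) ≤ n + 1 :=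
  Nat.findGreatest_spec (P := fun j => aSeq FF j ≤ n+1) (Nat.zero_le _)
    (by simp [aSeq])

lemma stIdx_lt (n : ℕ) : n + 1 < aSeq FF (stIdx FF (n) + 1) := by
  by_contra hcon
  push_neg at hcon
  have hb : stIdx FF n + 1 ≤ n + 1 := by
    have := lt_aSeq FF hne (stIdx FF n)
    have := stIdx_le FF hne n
    omega
  exact Nat.findGreatest_is_greatest (P := fun j => aSeq FF j ≤ n+1)
    (Nat.lt_succ_self _) hb hcon

lemma stIdx_eq {n j : ℕ} (h1 : aSeq FF j ≤ n+1) (h2 : n+1 < aSeq FF (j+1)) :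
    stIdx FF n = j := by
  have hge : j ≤ stIdx FF n := by
    refine Nat.le_findGreatest ?_ h1
    have := lt_aSeq FF hne j
    omega
  rcases Nat.lt_or_ge (stIdx FF n) (j+1) with h | h
  · omega
  · have := aSeq_mono FF hne h
    have := stIdx_le FF hne n
    omega

def Eset (n : ℕ) : Finset G := Dset FF (stIdx FF n) (n + 1 - aSeq FF (stIdx FF n))

lemma Eset_card (n : ℕ) : (Eset FF n).card = n + 1 := by
  rw [Eset, Dset_card FF hne, Aset_card FF hne]
  have := stIdx_le FF hne n
  omega

lemma Eset_zero : Eset FF 0 = {1} := by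
  have h0 : stIdx FF 0 = 0 :=
    stIdx_eq FF hne (by simp [aSeq]) (by simpa [aSeq] using aSeq_lt_succ FF hne 0)
  rw [Eset, h0, show (0 + 1 - aSeq FF 0) = 0 from by simp [aSeq], Dset_zero FF hne]
  rfl

lemma Dset_mono (j : ℕ) {m m' : ℕ} (h : m ≤ m') : Dset FF j m ⊆ Dset FF j m' :=
  Finset.union_subset_union (le_refl _) (Finset.image_subset_image (by
    intro x hx; rw [Finset.mem_range] at hx ⊢; omega))

lemma Eset_mono (n : ℕ) : Eset FF n ⊆ Eset FF (n+1) := by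
  have h1 := stIdx_le FF hne n
  have h2 := stIdx_lt FF hne n
  rcases Nat.lt_or_ge (n + 2) (aSeq FF (stIdx FF n + 1)) with h | h
  · have heq : stIdx FF (n+1) = stIdx FF n := stIdx_eq FF hne (by omega) h
    rw [Eset, Eset, heq]
    exact Dset_mono FF hne _ (by omega)
  · have hEnd : n + 2 = aSeq FF (stIdx FF n + 1) := by omega
    have heq : stIdx FF (n+1) = stIdx FF n + 1 := by
      refine stIdx_eq FF hne (by omega) ?_
      have := aSeq_lt_succ FF hne (stIdx FF n + 1)
      omega
    rw [Eset, Eset, heq, show n + 1 + 1 - aSeq FF (stIdx FF n + 1) = 0 from by omega,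
      Dset_zero FF hne, ← Dset_full FF hne]
    refine le_trans (Dset_mono FF hne _ ?_) (le_refl _)
    rw [aSeq_succ] at hEnd
    omega

lemma master (j n : ℕ) (g : G) (hst : stIdx FF n = j + 1)
    (hj1 : dcard FF j g * (j+1) ≤ fsz FF j)
    (hj2 : dcard FF (j+1) g * (j+2) ≤ fsz FF (j+1)) :
    ((Eset FF n) ∆ (Eset FF n).image (fun h => g * h)).card * (j+1) ≤ 4 * (n+1) := by
  have hf := fsz_pos FF hne j
  have hf' := fsz_pos FF hne (j+1)
  set m := n + 1 - aSeq FF (j+1) with hm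
  have hE : Eset FF n = Dset FF (j+1) m := by rw [Eset, hst]
  have ha : aSeq FF (j+1) ≤ n+1 := by have := stIdx_le FF hne n; rwa [hst] at this
  have hif : (m / fsz FF (j+1)) * fsz FF (j+1) ≤ m := Nat.div_mul_le_self _ _
  have hD := Dset_invariance FF hne (j+1) m g
  have hAinv := Aset_invariance FF hne j g
  have hN1 : 2*(j+1)*(aSeq FF j) ≤ Nblk FF j := le_max_left _ _
  have hN2 : 8*(j+2)*(fsz FF (j+1)) ≤ Nblk FF j := le_max_right _ _
  set NF := Nblk FF j * fsz FF j with hNFdef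
  have hNf : Nblk FF j ≤ NF := Nat.le_mul_of_pos_right _ hf
  have haS : aSeq FF (j+1) = aSeq FF j + NF := aSeq_succ FF j
  have hSle : ((Eset FF n) ∆ (Eset FF n).image (fun h => g * h)).card ≤
      2*aSeq FF j + Nblk FF j * dcard FF j g + (m / fsz FF (j+1)) * dcard FF (j+1) g +
        2 * fsz FF (j+1) := by
    rw [hE]
    omega
  have hc1 : 2*aSeq FF j*(j+1) ≤ NF := by
    calc 2*aSeq FF j*(j+1) = 2*(j+1)*(aSeq FF j) := by ring
    _ ≤ Nblk FF j := hN1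
    _ ≤ NF := hNf
  have hc2 : Nblk FF j * dcard FF j g * (j+1) ≤ NF := by
    calc Nblk FF j * dcard FF j g * (j+1) = Nblk FF j * (dcard FF j g * (j+1)) := by ring
    _ ≤ Nblk FF j * fsz FF j := Nat.mul_le_mul le_rfl hj1
  have hc3 : (m / fsz FF (j+1)) * dcard FF (j+1) g * (j+1) ≤ m := by
    calc (m / fsz FF (j+1)) * dcard FF (j+1) g * (j+1)
        ≤ (m / fsz FF (j+1)) * (dcard FF (j+1) g * (j+2)) := by
          rw [mul_assoc]
          exact Nat.mul_le_mul le_rfl (Nat.mul_le_mul le_rfl (by omega))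
    _ ≤ (m / fsz FF (j+1)) * fsz FF (j+1) := Nat.mul_le_mul le_rfl hj2
    _ ≤ m := hif
  have hc4 : 2*fsz FF (j+1)*(j+1) ≤ NF := by
    calc 2*fsz FF (j+1)*(j+1) = (2*(j+1))*(fsz FF (j+1)) := by ring
    _ ≤ (8*(j+2))*(fsz FF (j+1)) := Nat.mul_le_mul (by omega) le_rfl
    _ = 8*(j+2)*(fsz FF (j+1)) := by ring
    _ ≤ Nblk FF j := hN2
    _ ≤ NF := hNf
  calc ((Eset FF n) ∆ (Eset FF n).image (fun h => g * h)).card * (j+1)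
      ≤ (2*aSeq FF j + Nblk FF j * dcard FF j g + (m / fsz FF (j+1)) * dcard FF (j+1) g +
        2 * fsz FF (j+1)) * (j+1) := Nat.mul_le_mul hSle le_rfl
    _ = 2*aSeq FF j*(j+1) + Nblk FF j * dcard FF j g*(j+1) +
        (m / fsz FF (j+1)) * dcard FF (j+1) g*(j+1) + 2*fsz FF (j+1)*(j+1) := by ring
    _ ≤ NF + NF + m + NF := add_le_add (add_le_add (add_le_add hc1 hc2) hc3) hc4
    _ ≤ 4 * (n+1) := by omega

lemma stIdx_tendsto : Tendsto (stIdx FF) atTop atTop := by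
  refine tendsto_atTop_atTop.mpr fun b => ⟨aSeq FF b, fun n hn => ?_⟩
  refine Nat.le_findGreatest ?_ (by omega)
  have := lt_aSeq FF hne b
  omega

end Struct

end FolnerAux

/-- Corollary 2.8: every countably infinite group admitting a Følner sequence admits a
Følner sequence which is nested, centered (its first term is `{e}`) and progresses by
one element (the `n`-th term has exactly `n` elements; here indexed so that
`|F n| = n + 1`). -/
theorem exists_nested_centered_folner {G : Type*} [Group G] [Countable G] [Infinite G]
    (hG : ∃ F : ℕ → Finset G, IsFolnerSeq F) :
    ∃ F : ℕ → Finset G, IsFolnerSeq F ∧ (∀ n, F n ⊆ F (n + 1)) ∧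
      F 0 = {1} ∧ ∀ n, (F n).card = n + 1 := by
  obtain ⟨F0, hF0ne, hF0⟩ := hG
  obtain ⟨φ, hφ⟩ := exists_surjective_nat G
  have hex : ∀ j : ℕ, ∃ Fj : Finset G, Fj.Nonempty ∧
      ∀ g ∈ (Finset.range (j+1)).image φ,
        (Fj ∆ Fj.image (fun h => g * h)).card * (j+1) ≤ Fj.card := by
    intro j
    have hev : ∀ᶠ n in atTop, ∀ g ∈ (Finset.range (j+1)).image φ,
        ((F0 n ∆ (F0 n).image (fun h => g * h)).card : ℝ) / (F0 n).card < 1/(j+1) := by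
      rw [Finset.eventually_all]
      intro g _
      exact (hF0 g).eventually (gt_mem_nhds (by positivity))
    obtain ⟨n, hn⟩ := hev.exists
    refine ⟨F0 n, hF0ne n, fun g hg => ?_⟩
    have hpos : (0:ℝ) < ((F0 n).card : ℝ) := by
      exact_mod_cast Finset.card_pos.2 (hF0ne n)
    have h1 := hn g hg
    rw [div_lt_div_iff₀ hpos (by positivity)] at h1
    have h2 : (((F0 n ∆ (F0 n).image (fun h => g * h)).card : ℝ)) * (j+1) < (F0 n).card := by
      nlinarith
    exact_mod_cast le_of_lt h2
  choose FF hFF using hex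
  have hne : ∀ j, (FF j).Nonempty := fun j => (hFF j).1
  refine ⟨Eset FF, ⟨fun n => ?_, fun g => ?_⟩, fun n => Eset_mono FF hne n,
    Eset_zero FF hne, fun n => Eset_card FF hne n⟩
  · rw [← Finset.card_pos, Eset_card FF hne n]
    omega
  · obtain ⟨t, ht⟩ := hφ g
    have hub : ∀ᶠ n in atTop,
        ((Eset FF n ∆ (Eset FF n).image (fun h => g * h)).card : ℝ) / ((Eset FF n).card : ℝ) ≤
          4 / (stIdx FF n : ℝ) := by
      filter_upwards [(stIdx_tendsto FF hne).eventually (eventually_ge_atTop (t+1))] with n hn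
      set j := stIdx FF n - 1 with hj
      have hst : stIdx FF n = j + 1 := by omega
      have hg1 : g ∈ (Finset.range (j+1)).image φ :=
        Finset.mem_image.2 ⟨t, Finset.mem_range.2 (by omega), ht⟩
      have hg2 : g ∈ (Finset.range (j+1+1)).image φ :=
        Finset.mem_image.2 ⟨t, Finset.mem_range.2 (by omega), ht⟩
      have hM := master FF hne j n g hst ((hFF j).2 g hg1) ((hFF (j+1)).2 g hg2)
      rw [Eset_card FF hne n, hst]
      have h1 : (0:ℝ) < (n:ℝ)+1 := by positivity
      have h2 : (0:ℝ) < ((j:ℝ)+1) := by positivity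
      rw [show ((n+1 : ℕ) : ℝ) = (n:ℝ)+1 from by push_cast; ring,
        show ((j+1 : ℕ) : ℝ) = (j:ℝ)+1 from by push_cast; ring,
        div_le_div_iff₀ h1 h2]
      have := (Nat.cast_le (α := ℝ)).2 hM
      push_cast at this
      linarith
    have hlb : ∀ᶠ n in atTop, (0:ℝ) ≤
        ((Eset FF n ∆ (Eset FF n).image (fun h => g * h)).card : ℝ) / ((Eset FF n).card : ℝ) :=
      Filter.Eventually.of_forall (fun n => by positivity)
    exact tendsto_of_tendsto_of_tendsto_of_le_of_le' tendsto_const_nhds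
      ((tendsto_const_div_atTop_nhds_zero_nat 4).comp (stIdx_tendsto FF hne)) hlb hub
end

section
/- (Theorem 3.5, orbit-equivalence part, pointwise version) Let G be a countably infinite group acting on a set X and let φ : X → Õ be an equivariant map (φ(g·x) = g(φ(x)) for all g ∈ G, x ∈ X). Define the successor map S : X → X by S(x) = bi_{φ(x)}(1)·x. Then S is a bijection of X; for every k ∈ ℤ and x ∈ X, S^k(x) = bi_{φ(x)}(k)·x; and consequently the S-orbit {S^k(x) : k ∈ ℤ} equals the G-orbit {g·x : g ∈ G} for every x ∈ X. -/
open scoped Classical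

/-- The `G`-action on `{0,1}^{G×G}` corresponding to `a (g(≺)) b ⟺ ag ≺ bg`. -/
def actB {G : Type*} [Group G] (g : G) (x : G × G → Bool) : G × G → Bool :=
  fun p => x (p.1 * g, p.2 * g)

/-- Existence of an anchored order isomorphism for an order of type ℤ. -/
lemma exists_anchoredIso {G : Type*} [One G] (r : G → G → Prop) (h : IsZOrder r) :
    ∃ f : ℤ → G, IsAnchoredIso r f := by
  obtain ⟨hsto, hfin, hmin, hmax⟩ := h
  letI := hsto
  letI : DecidableRel r := fun a b => Classical.dec _
  letI : LinearOrder G := linearOrderOfSTO r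
  have hlt : ∀ a b : G, a < b ↔ r a b := fun a b => Iff.rfl
  letI : LocallyFiniteOrder G := LocallyFiniteOrder.ofFiniteIcc (fun a b => by
    have : Set.Icc a b ⊆ insert a (insert b {g : G | r a g ∧ r g b}) := by
      rintro g ⟨h1, h2⟩
      rcases h1.lt_or_eq with h1 | h1
      · rcases h2.lt_or_eq with h2 | h2
        · exact Set.mem_insert_iff.2 (Or.inr (Set.mem_insert_iff.2 (Or.inr ⟨h1, h2⟩)))
        · exact Set.mem_insert_iff.2 (Or.inr (Set.mem_insert_iff.2 (Or.inl h2)))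
      · exact Set.mem_insert_iff.2 (Or.inl h1.symm)
    exact Set.Finite.subset (((hfin a b).insert b).insert a) this)
  haveI : NoMaxOrder G := ⟨fun a => (hmax a).imp fun b hb => hb⟩
  haveI : NoMinOrder G := ⟨fun a => (hmin a).imp fun b hb => hb⟩
  haveI : Nonempty G := ⟨1⟩
  letI : SuccOrder G := LinearLocallyFiniteOrder.succOrder G
  letI : PredOrder G := LinearLocallyFiniteOrder.predOrder G
  let e : G ≃o ℤ := orderIsoIntOfLinearSuccPredArch
  refine ⟨fun i => e.symm (i + e 1), ?_, ?_, ?_⟩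
  · exact e.symm.bijective.comp (Equiv.addRight (e 1)).bijective
  · simp
  · intro i j
    rw [← hlt]
    simp [e.symm.lt_iff_lt]

/-- `biOf` is an anchored order isomorphism for an order of type ℤ. -/
lemma biOf_spec_s11 {G : Type*} [One G] (r : G → G → Prop) (h : IsZOrder r) :
    IsAnchoredIso r (biOf r) := by
  have he := exists_anchoredIso r h
  rw [biOf, dif_pos he]
  exact he.choose_spec

/-- Uniqueness of the anchored order isomorphism. -/
lemma anchoredIso_unique {G : Type*} [One G] (r : G → G → Prop) {f f' : ℤ → G}
    (hf : IsAnchoredIso r f) (hf' : IsAnchoredIso r f') : f = f' := by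
  obtain ⟨hbij, h0, hord⟩ := hf
  obtain ⟨hbij', h0', hord'⟩ := hf'
  let e := Equiv.ofBijective f hbij
  let e' := Equiv.ofBijective f' hbij'
  set g : ℤ → ℤ := fun i => e'.symm (e i) with hg
  have hfix : ∀ i : ℤ, f' (g i) = f i := by
    intro i
    exact e'.apply_symm_apply (e i)
  have hmono : StrictMono g := by
    intro i j hij
    rw [hord', hfix, hfix]
    exact (hord i j).1 hij
  have hgsurj : Function.Surjective g := fun n => ⟨e.symm (e' n), by simp [g]⟩
  have hg0 : g 0 = 0 := by
    have h : e (0 : ℤ) = e' (0 : ℤ) := by simp [e, e', h0, h0']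
    simp [g, h]
  have hid : ∀ i : ℤ, g i = i := by
    have key : ∀ i : ℤ, g (i + 1) = g i + 1 := by
      intro i
      have h1 : g i < g (i + 1) := hmono (by omega)
      rcases hgsurj (g i + 1) with ⟨j, hj⟩
      have hij : i < j := by
        by_contra hc
        push_neg at hc
        rcases hc.lt_or_eq with hc | hc
        · have := hmono hc; omega
        · subst hc; omega
      have := hmono.le_iff_le.2 (show i + 1 ≤ j by omega)
      omega
    intro i
    induction i using Int.induction_on with
    | zero => exact hg0
    | succ n ih => rw [key, ih]
    | pred n ih =>
      have := key (-(n : ℤ) - 1)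
      simp only [sub_add_cancel] at this
      omega
  funext i
  have h2 := hfix i
  rw [hid i] at h2
  exact h2.symm

lemma relOf_actB {G : Type*} [Group G] (g : G) (x : G × G → Bool) (a b : G) :
    relOf (actB g x) a b ↔ relOf x (a * g) (b * g) := Iff.rfl

/-- How `biOf` transforms under the action. -/
lemma biOf_actB {G : Type*} [Group G] (g : G) (x : G × G → Bool)
    (hx : IsZOrder (relOf x)) (hg : IsZOrder (relOf (actB g x)))
    (m : ℤ) (hm : biOf (relOf x) m = g) (k : ℤ) :
    biOf (relOf (actB g x)) k = biOf (relOf x) (k + m) * g⁻¹ := by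
  have hb := biOf_spec_s11 (relOf x) hx
  obtain ⟨hbij, h0, hord⟩ := hb
  have hnew : IsAnchoredIso (relOf (actB g x)) (fun k => biOf (relOf x) (k + m) * g⁻¹) := by
    refine ⟨?_, ?_, ?_⟩
    · exact (Equiv.mulRight g⁻¹).bijective.comp (hbij.comp (Equiv.addRight m).bijective)
    · simp [zero_add, hm]
    · intro i j
      rw [relOf_actB]
      simp only [inv_mul_cancel_right]
      rw [← hord]
      omega
  have := anchoredIso_unique (relOf (actB g x)) (biOf_spec_s11 _ hg) hnew
  exact congrFun this k

/-- Theorem 3.5 (orbit-equivalence part, pointwise version): if `φ : X → Õ` is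
`G`-equivariant then the successor map `S(x) = bi_{φ(x)}(1)·x` is a bijection of `X`,
`S^k(x) = bi_{φ(x)}(k)·x` for all `k ∈ ℤ`, and the `S`-orbit of every point coincides
with its `G`-orbit. -/
theorem successor_map_orbit_equivalence {G X : Type*} [Group G] [Countable G]
    [Infinite G] [MulAction G X]
    (φ : X → G × G → Bool) (hmem : ∀ x : X, φ x ∈ ZOrders G)
    (heq : ∀ (g : G) (x : X), φ (g • x) = actB g (φ x)) :
    ∃ T : Equiv.Perm X, (∀ x : X, T x = biOf (relOf (φ x)) 1 • x) ∧
      (∀ (k : ℤ) (x : X), (T ^ k) x = biOf (relOf (φ x)) k • x) ∧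
      (∀ x : X, {y : X | ∃ k : ℤ, (T ^ k) x = y} = MulAction.orbit G x) := by
  set bi : X → ℤ → G := fun x => biOf (relOf (φ x)) with hbi
  have hzo : ∀ x : X, IsZOrder (relOf (φ x)) := hmem
  have hspec : ∀ x : X, IsAnchoredIso (relOf (φ x)) (bi x) := fun x =>
    biOf_spec_s11 _ (hzo x)
  -- key translation identity
  have hkey : ∀ (x : X) (m k : ℤ), bi (bi x m • x) k = bi x (k + m) * (bi x m)⁻¹ := by
    intro x m k
    have h1 : φ (bi x m • x) = actB (bi x m) (φ x) := heq _ x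
    have h2 : IsZOrder (relOf (actB (bi x m) (φ x))) := by rw [← h1]; exact hzo _
    have := biOf_actB (bi x m) (φ x) (hzo x) h2 m rfl k
    rw [← h1] at this
    exact this
  have h0 : ∀ x : X, bi x 0 = 1 := fun x => (hspec x).2.1
  let T : Equiv.Perm X :=
    { toFun := fun x => bi x 1 • x
      invFun := fun x => bi x (-1) • x
      left_inv := by
        intro x
        show bi (bi x 1 • x) (-1) • (bi x 1 • x) = x
        have := hkey x 1 (-1)
        simp only [neg_add_cancel, h0, one_mul] at this
        rw [this, smul_smul, inv_mul_cancel, one_smul]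
      right_inv := by
        intro x
        show bi (bi x (-1) • x) 1 • (bi x (-1) • x) = x
        have := hkey x (-1) 1
        simp only [add_neg_cancel, h0, one_mul] at this
        rw [this, smul_smul, inv_mul_cancel, one_smul] }
  have hT : ∀ x : X, T x = bi x 1 • x := fun x => rfl
  have hTinv : ∀ x : X, T.symm x = bi x (-1) • x := fun x => rfl
  have hpow : ∀ (k : ℤ) (x : X), (T ^ k) x = bi x k • x := by
    intro k
    induction k using Int.induction_on with
    | zero => intro x; simp [h0]
    | succ n ih =>
      intro x
      rw [zpow_add_one, Equiv.Perm.mul_apply, hT, ih, hkey x 1 (n : ℤ), smul_smul,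
        inv_mul_cancel_right]
    | pred n ih =>
      intro x
      rw [zpow_sub_one, Equiv.Perm.mul_apply, Equiv.Perm.inv_def, hTinv, ih,
        hkey x (-1) (-(n : ℤ)), smul_smul, inv_mul_cancel_right]
      have harg : -(n : ℤ) + -1 = -(n : ℤ) - 1 := by ring
      rw [harg]
  refine ⟨T, hT, hpow, ?_⟩
  intro x
  ext y
  simp only [Set.mem_setOf_eq, MulAction.mem_orbit_iff]
  constructor
  · rintro ⟨k, rfl⟩
    exact ⟨bi x k, (hpow k x).symm⟩
  · rintro ⟨g, rfl⟩
    obtain ⟨k, hk⟩ := (hspec x).1.2 g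
    exact ⟨k, by rw [hpow k x, hk]⟩
end
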